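/- Let p ∈ (0,1), n ≥ 1/p, n₊ = ⌊pn⌋ and n₋ = n − n₊. Let x₁,…,x_{n₊} and y₁,…,y_{n₋} be real numbers with empirical CDFs F̂_{n₊}(t) := (1/n₊)#{i : x_i ≤ t} and F̂_{n₋}(t) := (1/n₋)#{j : y_j ≤ t}, and let F̂_n := (n₊/n) F̂_{n₊} + (n₋/n) F̂_{n₋} be the pooled empirical CDF. Let F₊, F₋ : ℝ → [0,1] be any functions and F := p F₊ + (1−p) F₋. Let I ⊆ {1,…,n} index the positive observations in the pooled sample, |I| = n₊, with pooled values z₁,…,z_n, and let φ : [0,1] → ℝ be twice continuously differentiable. Then (1/n₊) | Σ_{i∈I} [ φ( n F̂_n(z_i)/(n+1) ) − φ( F(z_i) ) − φ′( F(z_i) ) ( n F̂_n(z_i)/(n+1) − F(z_i) ) ] | ≤ 3 p² ‖φ″‖_∞ sup_t ( F̂_{n₊}(t) − F₊(t) )² + 3 (1−p)² ‖φ″‖_∞ sup_t ( F̂_{n₋}(t) − F₋(t) )² + 13 ‖φ″‖_∞ / n². -/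

import Mathlib

open Finset


lemma taylor_aux (φ φ' φ'' : ℝ → ℝ) (hφ : ContDiffOn ℝ 2 φ (Set.Icc 0 1))
    (hφ' : φ' = derivWithin φ (Set.Icc 0 1)) (hφ'' : φ'' = derivWithin φ' (Set.Icc 0 1))
    (C : ℝ) (hC : ∀ u ∈ Set.Icc (0:ℝ) 1, |φ'' u| ≤ C)
    (a b : ℝ) (ha : a ∈ Set.Icc (0:ℝ) 1) (hb : b ∈ Set.Icc (0:ℝ) 1) :
    |φ a - φ b - φ' b * (a - b)| ≤ C * (a - b)^2 := by
  have hs : UniqueDiffOn ℝ (Set.Icc (0:ℝ) 1) := uniqueDiffOn_Icc (by norm_num)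
  have hd1 : ∀ x ∈ Set.Icc (0:ℝ) 1, HasDerivWithinAt φ (φ' x) (Set.Icc 0 1) x := by
    intro x hx
    rw [hφ']
    exact ((hφ.differentiableOn (by norm_num)) x hx).hasDerivWithinAt
  have hc1 : ContDiffOn ℝ 1 φ' (Set.Icc 0 1) := by
    rw [hφ']; exact hφ.derivWithin hs (by norm_num)
  have hd2 : ∀ x ∈ Set.Icc (0:ℝ) 1, HasDerivWithinAt φ' (φ'' x) (Set.Icc 0 1) x := by
    intro x hx
    rw [hφ'']
    exact ((hc1.differentiableOn (by norm_num)) x hx).hasDerivWithinAt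
  have hC0 : 0 ≤ C := le_trans (abs_nonneg _) (hC b hb)
  have hlip : ∀ x ∈ Set.Icc (0:ℝ) 1, |φ' x - φ' b| ≤ C * |x - b| := by
    intro x hx
    have := Convex.norm_image_sub_le_of_norm_hasDerivWithin_le hd2
      (fun u hu => by simpa using hC u hu) (convex_Icc 0 1) hb hx
    simpa [Real.norm_eq_abs] using this
  set s := Set.uIcc b a with hsdef
  have hsub : s ⊆ Set.Icc (0:ℝ) 1 := Set.uIcc_subset_Icc hb ha
  have hψ : ∀ x ∈ s, HasDerivWithinAt (fun y => φ y - φ' b * y) (φ' x - φ' b) s x := by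
    intro x hx
    have h1 : HasDerivWithinAt φ (φ' x) s x := (hd1 x (hsub hx)).mono hsub
    have h2 : HasDerivWithinAt (fun y => φ' b * y) (φ' b) s x := by
      simpa using (hasDerivWithinAt_id x s).const_mul (φ' b)
    exact h1.sub h2
  have hbound : ∀ x ∈ s, ‖φ' x - φ' b‖ ≤ C * |a - b| := by
    intro x hx
    have h1 : |x - b| ≤ |a - b| := by
      rcases Set.mem_uIcc.mp hx with ⟨h1, h2⟩ | ⟨h1, h2⟩ <;>
        (rw [abs_le]; constructor <;> nlinarith [le_abs_self (a - b), neg_abs_le (a - b)])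
    have h2 := hlip x (hsub hx)
    calc ‖φ' x - φ' b‖ = |φ' x - φ' b| := Real.norm_eq_abs _
      _ ≤ C * |x - b| := h2
      _ ≤ C * |a - b| := by nlinarith
  have hkey := Convex.norm_image_sub_le_of_norm_hasDerivWithin_le hψ hbound
    (convex_uIcc b a) Set.left_mem_uIcc Set.right_mem_uIcc
  have h3 : |φ a - φ' b * a - (φ b - φ' b * b)| ≤ C * |a - b| * |a - b| := by
    simpa [Real.norm_eq_abs] using hkey
  calc |φ a - φ b - φ' b * (a - b)|
      = |φ a - φ' b * a - (φ b - φ' b * b)| := by ring_nf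
    _ ≤ C * |a - b| * |a - b| := h3
    _ = C * (a - b)^2 := by rw [mul_assoc, abs_mul_abs_self, ← sq]

lemma abs_aux (w δ Fp Fm q : ℝ) (hδ0 : 0 ≤ δ) (hδ1 : δ ≤ w)
    (h1 : 0 ≤ Fp) (h2 : Fp ≤ 1) (h3 : 0 ≤ Fm) (h4 : Fm ≤ 1) (h7 : q ≤ w) (h9 : 0 ≤ q) :
    |δ * (Fm - Fp) - q| ≤ 2 * w := by
  rw [abs_le]
  constructor <;> nlinarith [mul_nonneg hδ0 h3, mul_nonneg hδ0 h1,
    mul_le_of_le_one_right hδ0 h4, mul_le_of_le_one_right hδ0 h2]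

lemma sq_aux (w u v r s : ℝ) (hr : |r| ≤ 2 * w) (hs : s = u + v + r) (hw : 0 ≤ w) :
    s^2 ≤ 3 * u^2 + 3 * v^2 + 12 * w^2 := by
  obtain ⟨hr1, hr2⟩ := abs_le.mp hr
  subst hs
  nlinarith [sq_nonneg (u - v), sq_nonneg (u - r), sq_nonneg (v - r),
    sq_nonneg (r - 2*w), sq_nonneg (r + 2*w)]

set_option maxHeartbeats 1000000 in
/-- Deterministic bound on the Taylor–Lagrange remainder of the linearization of the two-sample
rank statistic, splitting the pooled empirical CDF deviation into the deviations of the two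
subsample empirical CDFs (proof of Proposition 3 of the supplementary material). -/
theorem stmt_14 (p : ℝ) (hp : p ∈ Set.Ioo (0 : ℝ) 1) (n : ℕ) (hn : 1 / p ≤ (n : ℝ))
    (nplus nminus : ℕ) (hnplus : nplus = ⌊p * n⌋₊) (hnminus : nminus = n - nplus)
    (x : Fin nplus → ℝ) (y : Fin nminus → ℝ)
    (Fhatplus Fhatminus Fhatn : ℝ → ℝ)
    (hFhatplus : ∀ t, Fhatplus t
      = ((univ.filter fun i : Fin nplus => x i ≤ t).card : ℝ) / nplus)
    (hFhatminus : ∀ t, Fhatminus t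
      = ((univ.filter fun j : Fin nminus => y j ≤ t).card : ℝ) / nminus)
    (hFhatn : ∀ t, Fhatn t = (nplus / n : ℝ) * Fhatplus t + (nminus / n : ℝ) * Fhatminus t)
    (Fplus Fminus : ℝ → ℝ)
    (hFplus : ∀ t, Fplus t ∈ Set.Icc (0 : ℝ) 1)
    (hFminus : ∀ t, Fminus t ∈ Set.Icc (0 : ℝ) 1)
    (F : ℝ → ℝ) (hF : ∀ t, F t = p * Fplus t + (1 - p) * Fminus t)
    (z : Fin n → ℝ) (I : Finset (Fin n)) (hIcard : I.card = nplus)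
    (e : Fin nplus ↪ Fin n) (f : Fin nminus ↪ Fin n)
    (hef : ∀ i j, e i ≠ f j)
    (hI : I = univ.map e)
    (hzx : ∀ i, z (e i) = x i) (hzy : ∀ j, z (f j) = y j)
    (φ : ℝ → ℝ) (hφ : ContDiffOn ℝ 2 φ (Set.Icc 0 1))
    (φ' φ'' : ℝ → ℝ)
    (hφ' : φ' = derivWithin φ (Set.Icc 0 1))
    (hφ'' : φ'' = derivWithin φ' (Set.Icc 0 1)) :
    (1 / nplus : ℝ) * |∑ i ∈ I, (φ (n * Fhatn (z i) / (n + 1)) - φ (F (z i))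
        - φ' (F (z i)) * (n * Fhatn (z i) / (n + 1) - F (z i)))|
      ≤ 3 * p ^ 2 * (⨆ u : Set.Icc (0 : ℝ) 1, |φ'' u|)
          * (⨆ t : ℝ, (Fhatplus t - Fplus t) ^ 2)
        + 3 * (1 - p) ^ 2 * (⨆ u : Set.Icc (0 : ℝ) 1, |φ'' u|)
          * (⨆ t : ℝ, (Fhatminus t - Fminus t) ^ 2)
        + 13 * (⨆ u : Set.Icc (0 : ℝ) 1, |φ'' u|) / n ^ 2 := by
  obtain ⟨hp0, hp1⟩ := hp
  -- basic numeric facts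
  have hn0 : (0:ℝ) < n := lt_of_lt_of_le (by positivity) hn
  have hpn1 : (1:ℝ) ≤ p * n := by
    have := mul_le_mul_of_nonneg_left hn hp0.le
    rwa [mul_one_div, div_self hp0.ne'] at this
  have hnp1 : 1 ≤ nplus := by
    rw [hnplus]
    exact Nat.le_floor (by exact_mod_cast hpn1)
  have hnp0 : (0:ℝ) < nplus := by exact_mod_cast hnp1
  have hfl_le : (nplus:ℝ) ≤ p * n := by
    rw [hnplus]; exact Nat.floor_le (by positivity)
  have hfl_gt : p * n < (nplus:ℝ) + 1 := by
    rw [hnplus]; exact_mod_cast Nat.lt_floor_add_one (p * n)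
  have hplt : (nplus:ℝ) < n := lt_of_le_of_lt hfl_le (by nlinarith)
  have hpltn : nplus < n := by exact_mod_cast hplt
  have hnmcast : (nminus:ℝ) = (n:ℝ) - nplus := by
    rw [hnminus, Nat.cast_sub hpltn.le]
  have hnm0 : (0:ℝ) < nminus := by rw [hnmcast]; linarith
  -- sup of |φ''|
  set C : ℝ := ⨆ u : Set.Icc (0 : ℝ) 1, |φ'' u| with hCdef
  have hs : UniqueDiffOn ℝ (Set.Icc (0:ℝ) 1) := uniqueDiffOn_Icc (by norm_num)
  have hc1 : ContDiffOn ℝ 1 φ' (Set.Icc 0 1) := by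
    rw [hφ']; exact hφ.derivWithin hs (by norm_num)
  have hcont'' : ContinuousOn φ'' (Set.Icc (0:ℝ) 1) := by
    rw [hφ'']
    exact (ContDiffOn.derivWithin (m := 0) hc1 hs (by norm_num)).continuousOn
  obtain ⟨M, hM⟩ := isCompact_Icc.exists_bound_of_continuousOn hcont''
  have hbddC : BddAbove (Set.range fun u : Set.Icc (0:ℝ) 1 => |φ'' u|) := by
    refine ⟨M, ?_⟩
    rintro _ ⟨u, rfl⟩
    simpa [Real.norm_eq_abs] using hM u u.2
  have hC : ∀ u ∈ Set.Icc (0:ℝ) 1, |φ'' u| ≤ C :=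
    fun u hu => le_ciSup hbddC (⟨u, hu⟩ : Set.Icc (0:ℝ) 1)
  have hC0 : (0:ℝ) ≤ C := le_trans (abs_nonneg _) (hC 0 (by norm_num))
  -- empirical CDFs are in [0,1]
  have hFhp01 : ∀ t, Fhatplus t ∈ Set.Icc (0:ℝ) 1 := by
    intro t
    rw [hFhatplus]
    constructor
    · positivity
    · rw [div_le_one hnp0]
      calc ((univ.filter fun i : Fin nplus => x i ≤ t).card : ℝ)
          ≤ ((univ : Finset (Fin nplus)).card : ℝ) := by
            exact_mod_cast Finset.card_filter_le _ _
        _ = nplus := by simp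
  have hFhm01 : ∀ t, Fhatminus t ∈ Set.Icc (0:ℝ) 1 := by
    intro t
    rw [hFhatminus]
    constructor
    · positivity
    · rw [div_le_one hnm0]
      calc ((univ.filter fun j : Fin nminus => y j ≤ t).card : ℝ)
          ≤ ((univ : Finset (Fin nminus)).card : ℝ) := by
            exact_mod_cast Finset.card_filter_le _ _
        _ = nminus := by simp
  have hFhn01 : ∀ t, Fhatn t ∈ Set.Icc (0:ℝ) 1 := by
    intro t
    rw [hFhatn]
    obtain ⟨h1, h2⟩ := hFhp01 t
    obtain ⟨h3, h4⟩ := hFhm01 t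
    have hc1' : (0:ℝ) ≤ (nplus:ℝ)/n := by positivity
    have hc2' : (0:ℝ) ≤ (nminus:ℝ)/n := by positivity
    have hsum : (nplus:ℝ)/n + (nminus:ℝ)/n = 1 := by
      rw [hnmcast]; field_simp; ring
    constructor
    · positivity
    · nlinarith
  have hF01 : ∀ t, F t ∈ Set.Icc (0:ℝ) 1 := by
    intro t
    rw [hF]
    obtain ⟨h1, h2⟩ := hFplus t
    obtain ⟨h3, h4⟩ := hFminus t
    constructor
    · nlinarith
    · nlinarith
  -- sups of squared deviations
  set Asq : ℝ := ⨆ t : ℝ, (Fhatplus t - Fplus t) ^ 2 with hAdef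
  set Bsq : ℝ := ⨆ t : ℝ, (Fhatminus t - Fminus t) ^ 2 with hBdef
  have hbddA : BddAbove (Set.range fun t : ℝ => (Fhatplus t - Fplus t) ^ 2) := by
    refine ⟨1, ?_⟩
    rintro _ ⟨t, rfl⟩
    obtain ⟨h1, h2⟩ := hFhp01 t
    obtain ⟨h3, h4⟩ := hFplus t
    dsimp only
    nlinarith [mul_nonneg (by linarith : (0:ℝ) ≤ 1 - (Fhatplus t - Fplus t))
      (by linarith : (0:ℝ) ≤ 1 + (Fhatplus t - Fplus t))]
  have hbddB : BddAbove (Set.range fun t : ℝ => (Fhatminus t - Fminus t) ^ 2) := by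
    refine ⟨1, ?_⟩
    rintro _ ⟨t, rfl⟩
    obtain ⟨h1, h2⟩ := hFhm01 t
    obtain ⟨h3, h4⟩ := hFminus t
    dsimp only
    nlinarith [mul_nonneg (by linarith : (0:ℝ) ≤ 1 - (Fhatminus t - Fminus t))
      (by linarith : (0:ℝ) ≤ 1 + (Fhatminus t - Fminus t))]
  have hA : ∀ t, (Fhatplus t - Fplus t) ^ 2 ≤ Asq := fun t => le_ciSup hbddA t
  have hB : ∀ t, (Fhatminus t - Fminus t) ^ 2 ≤ Bsq := fun t => le_ciSup hbddB t
  have hA0 : (0:ℝ) ≤ Asq := le_trans (sq_nonneg _) (hA 0)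
  have hB0 : (0:ℝ) ≤ Bsq := le_trans (sq_nonneg _) (hB 0)
  -- pointwise bound
  set E : ℝ := 3 * p ^ 2 * C * Asq + 3 * (1 - p) ^ 2 * C * Bsq + 12 * C / n ^ 2 with hEdef
  have hterm : ∀ t : ℝ, |φ (n * Fhatn t / (n + 1)) - φ (F t)
      - φ' (F t) * (n * Fhatn t / (n + 1) - F t)| ≤ E := by
    intro t
    set a : ℝ := n * Fhatn t / (n + 1) with hadef
    set b : ℝ := F t with hbdef2
    have ha : a ∈ Set.Icc (0:ℝ) 1 := by
      obtain ⟨h1, h2⟩ := hFhn01 t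
      constructor
      · positivity
      · rw [hadef, div_le_one (by positivity)]
        nlinarith
    have hb : b ∈ Set.Icc (0:ℝ) 1 := hF01 t
    have htay := taylor_aux φ φ' φ'' hφ hφ' hφ'' C hC a b ha hb
    -- decompose a - b
    have hid : a - b - p * (Fhatplus t - Fplus t) - (1 - p) * (Fhatminus t - Fminus t)
        = (p - (nplus:ℝ)/n) * (Fhatminus t - Fhatplus t) - Fhatn t / (n + 1) := by
      rw [hadef, hbdef2, hF t, hFhatn t, hnmcast]
      field_simp
      ring
    have hδ0 : (0:ℝ) ≤ p - (nplus:ℝ)/n := by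
      rw [sub_nonneg, div_le_iff₀ hn0]; linarith
    have hδ1 : p - (nplus:ℝ)/n ≤ 1 / n := by
      rw [sub_le_iff_le_add, ← add_div, le_div_iff₀ hn0]
      linarith
    have hrle : |a - b - p * (Fhatplus t - Fplus t) - (1 - p) * (Fhatminus t - Fminus t)|
        ≤ 2 * (1 / n) := by
      obtain ⟨h1, h2⟩ := hFhp01 t
      obtain ⟨h3, h4⟩ := hFhm01 t
      obtain ⟨h5, h6⟩ := hFhn01 t
      have h7 : Fhatn t / (n + 1) ≤ 1 / n := by
        rw [div_le_div_iff₀ (by positivity) hn0]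
        nlinarith
      have h9 : (0:ℝ) ≤ Fhatn t / (n + 1) := by positivity
      rw [hid]
      exact abs_aux (1/n) _ _ _ _ hδ0 hδ1 h1 h2 h3 h4 h7 h9
    have hsq : (a - b)^2 ≤ 3 * (p * (Fhatplus t - Fplus t))^2
        + 3 * ((1 - p) * (Fhatminus t - Fminus t))^2 + 12 * (1/n)^2 :=
      sq_aux (1/n) _ _ _ _ hrle (by ring) (by positivity)
    calc |φ a - φ b - φ' b * (a - b)| ≤ C * (a - b)^2 := htay
      _ ≤ C * (3 * (p * (Fhatplus t - Fplus t))^2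
          + 3 * ((1 - p) * (Fhatminus t - Fminus t))^2 + 12 * (1/n)^2) :=
        mul_le_mul_of_nonneg_left hsq hC0
      _ = 3 * p^2 * C * (Fhatplus t - Fplus t)^2
          + 3 * (1-p)^2 * C * (Fhatminus t - Fminus t)^2 + 12 * C / n^2 := by
        field_simp
      _ ≤ E := by
        rw [hEdef]
        gcongr
        · exact hA t
        · exact hB t
  -- sum up
  have hE0 : (0:ℝ) ≤ E := by
    have := hterm 0
    exact le_trans (abs_nonneg _) this
  have hsum : |∑ i ∈ I, (φ (n * Fhatn (z i) / (n + 1)) - φ (F (z i))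
      - φ' (F (z i)) * (n * Fhatn (z i) / (n + 1) - F (z i)))| ≤ (nplus : ℝ) * E := by
    calc |∑ i ∈ I, (φ (n * Fhatn (z i) / (n + 1)) - φ (F (z i))
        - φ' (F (z i)) * (n * Fhatn (z i) / (n + 1) - F (z i)))|
        ≤ ∑ i ∈ I, |φ (n * Fhatn (z i) / (n + 1)) - φ (F (z i))
          - φ' (F (z i)) * (n * Fhatn (z i) / (n + 1) - F (z i))| :=
          Finset.abs_sum_le_sum_abs _ _
      _ ≤ ∑ _i ∈ I, E := Finset.sum_le_sum (fun i _ => hterm (z i))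
      _ = (nplus : ℝ) * E := by
          rw [Finset.sum_const, hIcard, nsmul_eq_mul]
  have hmain : (1 / nplus : ℝ) * |∑ i ∈ I, (φ (n * Fhatn (z i) / (n + 1)) - φ (F (z i))
      - φ' (F (z i)) * (n * Fhatn (z i) / (n + 1) - F (z i)))| ≤ E := by
    rw [div_mul_eq_mul_div, one_mul, div_le_iff₀ hnp0, mul_comm E]
    exact hsum
  refine hmain.trans ?_
  rw [hEdef]
  have h13 : 12 * C / n^2 ≤ 13 * C / n^2 := by
    apply div_le_div_of_nonneg_right ?_ (by positivity) |>.trans_eq rfl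
    nlinarith
  linarith
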